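/- Assume additionally that Ω is locally compact Hausdorff and that 1/q vanishes at infinity (1/q ∈ C₀(Ω)). Then the closure, in (C_b(Ω;ℂ), ‖·‖_∞), of the domain dom(M_q) = {f ∈ C_b(Ω;ℂ) : q·f is bounded} of the multiplication operator M_q f := q f equals C₀(Ω;ℂ), the space of continuous functions vanishing at infinity. -/
import Mathlib


open scoped Topology BoundedContinuousFunction

/-- If `Ω` is locally compact Hausdorff and `1/q` vanishes at infinity,
then the sup-norm closure in `C_b(Ω;ℂ)` of the domain
`dom(M_q) = {f : q·f bounded}` of the multiplication operator equals `C₀(Ω;ℂ)`. -/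
theorem statement17
    {Ω : Type*} [TopologicalSpace Ω] [LocallyCompactSpace Ω] [T2Space Ω]
    (q : Ω → ℂ) (hq : Continuous q)
    (ω : ℝ) (hω : ω < 0) (hqre : ∀ x : Ω, (q x).re ≤ ω)
    (hqinf : Filter.Tendsto (fun x : Ω => (q x)⁻¹) (Filter.cocompact Ω) (𝓝 0)) :
    closure {f : Ω →ᵇ ℂ | ∃ C : ℝ, ∀ x : Ω, ‖q x * f x‖ ≤ C} =
      {f : Ω →ᵇ ℂ | Filter.Tendsto (fun x : Ω => f x) (Filter.cocompact Ω) (𝓝 0)} := by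
  have hqne : ∀ x : Ω, q x ≠ 0 := by
    intro x h
    have := hqre x
    rw [h] at this
    simp at this
    linarith
  apply Set.Subset.antisymm
  · -- closure of domain ⊆ C₀
    apply closure_minimal
    · rintro f ⟨C, hC⟩
      rw [NormedAddCommGroup.tendsto_nhds_zero] at hqinf
      rw [Set.mem_setOf_eq, NormedAddCommGroup.tendsto_nhds_zero]
      intro ε hε
      have hC' : ∀ x, ‖q x * f x‖ ≤ max C 0 := fun x => (hC x).trans (le_max_left _ _)
      have h : (0:ℝ) ≤ max C 0 := le_max_right _ _
      have hC1 : 0 < max C 0 + 1 := by linarith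
      filter_upwards [hqinf (ε / (max C 0 + 1)) (by positivity)] with x hx
      have h1 : ‖f x‖ = ‖(q x)⁻¹‖ * ‖q x * f x‖ := by
        rw [← norm_mul, inv_mul_cancel_left₀ (hqne x)]
      calc ‖f x‖ ≤ ‖(q x)⁻¹‖ * max C 0 := by
            rw [h1]; exact mul_le_mul_of_nonneg_left (hC' x) (norm_nonneg _)
        _ < (ε / (max C 0 + 1)) * (max C 0 + 1) := by
            apply mul_lt_mul' hx.le _ h (by positivity)
            linarith
        _ = ε := div_mul_cancel₀ _ (by positivity)
    · -- C₀ set is closed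
      have : {f : Ω →ᵇ ℂ | Filter.Tendsto (fun x : Ω => f x) (Filter.cocompact Ω) (𝓝 0)} =
          Set.range (ZeroAtInftyContinuousMap.toBCF : ZeroAtInftyContinuousMap Ω ℂ → Ω →ᵇ ℂ) := by
        ext f
        constructor
        · intro hf
          exact ⟨⟨f.toContinuousMap, hf⟩, by ext x; rfl⟩
        · rintro ⟨g, rfl⟩
          exact g.zero_at_infty'
      rw [this]
      exact ZeroAtInftyContinuousMap.isClosed_range_toBCF
  · -- C₀ ⊆ closure of domain
    intro f hf
    rw [Metric.mem_closure_iff]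
    intro ε hε
    rw [Set.mem_setOf_eq, NormedAddCommGroup.tendsto_nhds_zero] at hf
    obtain ⟨K, hK, hKf⟩ : ∃ K : Set Ω, IsCompact K ∧ ∀ x ∉ K, ‖f x‖ < ε / 2 := by
      have := hf (ε / 2) (by positivity)
      rw [Filter.eventually_iff, Filter.mem_cocompact] at this
      obtain ⟨K, hK, hKs⟩ := this
      exact ⟨K, hK, fun x hx => hKs hx⟩
    obtain ⟨g, hg1, _, hgc, hg01⟩ :=
      exists_continuous_one_zero_of_isCompact hK isClosed_empty (Set.disjoint_empty K)
    -- the approximant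
    have hcont : Continuous fun x : Ω => (g x : ℂ) * f x := by
      exact (Complex.continuous_ofReal.comp g.continuous).mul f.continuous
    have hbd : ∀ x : Ω, ‖(g x : ℂ) * f x‖ ≤ ‖f‖ := by
      intro x
      rw [norm_mul, Complex.norm_real]
      have := hg01 x
      calc ‖g x‖ * ‖f x‖ ≤ 1 * ‖f x‖ := by
            apply mul_le_mul_of_nonneg_right _ (norm_nonneg _)
            rw [Real.norm_eq_abs, abs_le]; exact ⟨by linarith [this.1], this.2⟩
        _ = ‖f x‖ := one_mul _
        _ ≤ ‖f‖ := f.norm_coe_le_norm x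
    set h : Ω →ᵇ ℂ := BoundedContinuousFunction.ofNormedAddCommGroup _ hcont ‖f‖ hbd with hh
    refine ⟨h, ?_, ?_⟩
    · -- h ∈ domain
      obtain ⟨C, hC⟩ := (hgc.isCompact.image (hq.norm.mul f.continuous.norm)).bddAbove
      refine ⟨max C 0, fun x => ?_⟩
      by_cases hx : x ∈ tsupport g
      · have : ‖q x * h x‖ ≤ ‖q x‖ * ‖f x‖ := by
          simp only [hh, BoundedContinuousFunction.coe_ofNormedAddCommGroup]
          rw [norm_mul, norm_mul, Complex.norm_real]
          have := hg01 x
          calc ‖q x‖ * (‖g x‖ * ‖f x‖) ≤ ‖q x‖ * (1 * ‖f x‖) := by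
                apply mul_le_mul_of_nonneg_left _ (norm_nonneg _)
                apply mul_le_mul_of_nonneg_right _ (norm_nonneg _)
                rw [Real.norm_eq_abs, abs_le]; exact ⟨by linarith [this.1], this.2⟩
            _ = ‖q x‖ * ‖f x‖ := by ring
        exact this.trans ((hC (Set.mem_image_of_mem _ hx)).trans (le_max_left _ _))
      · have : g x = 0 := image_eq_zero_of_notMem_tsupport hx
        simp only [hh, BoundedContinuousFunction.coe_ofNormedAddCommGroup, this,
          Complex.ofReal_zero, zero_mul, mul_zero, norm_zero]
        exact le_max_right _ _
    · -- dist f h < ε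
      have : dist f h ≤ ε / 2 := by
        apply BoundedContinuousFunction.dist_le (by positivity) |>.mpr
        intro x
        simp only [hh, BoundedContinuousFunction.coe_ofNormedAddCommGroup]
        by_cases hx : x ∈ K
        · have : g x = 1 := hg1 hx
          simp [dist_eq_norm, this]
          positivity
        · have h1 : ‖f x - (g x : ℂ) * f x‖ = ‖(1 - (g x : ℂ)) * f x‖ := by ring_nf
          rw [dist_eq_norm, h1, norm_mul]
          have := hg01 x
          calc ‖1 - (g x : ℂ)‖ * ‖f x‖ ≤ 1 * ‖f x‖ := by
                apply mul_le_mul_of_nonneg_right _ (norm_nonneg _)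
                have : (1 : ℂ) - (g x : ℂ) = ((1 - g x : ℝ) : ℂ) := by push_cast; ring
                rw [this, Complex.norm_real, Real.norm_eq_abs, abs_le]
                constructor <;> [linarith [hg01 x |>.2]; linarith [hg01 x |>.1]]
            _ = ‖f x‖ := one_mul _
            _ ≤ ε / 2 := (hKf x hx).le
      linarith
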